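/- Let a_1,...,a_5 > 0 with a_2 > a_5, a_1·a_2 ≤ (a_3/(1+a_3²))·u for some u ∈ [(1/2)min(1,m), 1], and a_1·a_2·(1+a_2)² ≤ (a_3/(1+a_3²))·(a_2−a_5)·u². Then the derivative ∂_u f evaluated at (u, v[u]) satisfies ∂_u f(u, v[u]) = a_4·(a_3·(a_2−a_5)·u² − a_1·a_2·(2a_5u + u² + a_2a_5)) / ((a_2+u)(a_5+u)²(a_1a_2+a_3u)) ≥ a_4·a_3²·(a_2−a_5)·u / ((a_2+1)·(a_5+1)²·(a_3²+2)) ≥ a_4·a_3²·(a_2−a_5)·min(1,m) / (2·(a_2+1)·(a_5+1)²·(a_3²+2)). -/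

import Mathlib

set_option maxHeartbeats 1000000 in
theorem stmt_14 (a1 a2 a3 a4 a5 m u : ℝ)
    (h1 : 0 < a1) (h2 : 0 < a2) (h3 : 0 < a3) (h4 : 0 < a4) (h5 : 0 < a5)
    (hm : 0 < m) (h25 : a5 < a2)
    (hul : (1 / 2) * min 1 m ≤ u) (huu : u ≤ 1) (hu : 0 < u)
    (h7a : a1 * a2 ≤ a3 / (1 + a3 ^ 2) * u)
    (h7b : a1 * a2 * (1 + a2) ^ 2 ≤ a3 / (1 + a3 ^ 2) * (a2 - a5) * u ^ 2) :
    deriv (fun s : ℝ =>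
        (a1 + (a3 - a1) * s / (a2 + s))
            * (a4 * u * (a2 + u) / ((a5 + u) * (a1 * a2 + a3 * u)))
          - a4 * s / (a5 + s)) u
      = a4 * (a3 * (a2 - a5) * u ^ 2 - a1 * a2 * (2 * a5 * u + u ^ 2 + a2 * a5))
          / ((a2 + u) * (a5 + u) ^ 2 * (a1 * a2 + a3 * u)) ∧
    a4 * a3 ^ 2 * (a2 - a5) * u / ((a2 + 1) * (a5 + 1) ^ 2 * (a3 ^ 2 + 2))
      ≤ a4 * (a3 * (a2 - a5) * u ^ 2 - a1 * a2 * (2 * a5 * u + u ^ 2 + a2 * a5))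
          / ((a2 + u) * (a5 + u) ^ 2 * (a1 * a2 + a3 * u)) ∧
    a4 * a3 ^ 2 * (a2 - a5) * min 1 m / (2 * (a2 + 1) * (a5 + 1) ^ 2 * (a3 ^ 2 + 2))
      ≤ a4 * a3 ^ 2 * (a2 - a5) * u / ((a2 + 1) * (a5 + 1) ^ 2 * (a3 ^ 2 + 2)) := by
  have ha2u : (0:ℝ) < a2 + u := by linarith
  have ha5u : (0:ℝ) < a5 + u := by linarith
  have hden : (0:ℝ) < a1 * a2 + a3 * u := by positivity
  have ha3sq : (0:ℝ) < 1 + a3 ^ 2 := by positivity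
  have h25' : (0:ℝ) < a2 - a5 := by linarith
  -- derivative
  have hC := a4 * u * (a2 + u) / ((a5 + u) * (a1 * a2 + a3 * u))
  have hd1 : HasDerivAt (fun s : ℝ => (a3 - a1) * s) (a3 - a1) u := by
    simpa using (hasDerivAt_id u).const_mul (a3 - a1)
  have hd2 : HasDerivAt (fun s : ℝ => a2 + s) 1 u := (hasDerivAt_id u).const_add a2
  have hd3 : HasDerivAt (fun s : ℝ => (a3 - a1) * s / (a2 + s))
      (((a3 - a1) * (a2 + u) - (a3 - a1) * u * 1) / (a2 + u) ^ 2) u :=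
    hd1.div hd2 (ne_of_gt ha2u)
  have hd4 : HasDerivAt (fun s : ℝ => a4 * s) a4 u := by
    simpa using (hasDerivAt_id u).const_mul a4
  have hd5 : HasDerivAt (fun s : ℝ => a5 + s) 1 u := (hasDerivAt_id u).const_add a5
  have hd6 : HasDerivAt (fun s : ℝ => a4 * s / (a5 + s))
      ((a4 * (a5 + u) - a4 * u * 1) / (a5 + u) ^ 2) u := hd4.div hd5 (ne_of_gt ha5u)
  have hd7 : HasDerivAt (fun s : ℝ =>
      (a1 + (a3 - a1) * s / (a2 + s))
          * (a4 * u * (a2 + u) / ((a5 + u) * (a1 * a2 + a3 * u)))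
        - a4 * s / (a5 + s))
      ((((a3 - a1) * (a2 + u) - (a3 - a1) * u * 1) / (a2 + u) ^ 2)
          * (a4 * u * (a2 + u) / ((a5 + u) * (a1 * a2 + a3 * u)))
        - (a4 * (a5 + u) - a4 * u * 1) / (a5 + u) ^ 2) u :=
    ((hd3.const_add a1).mul_const _).sub hd6
  have hderiv := hd7.deriv
  refine ⟨?_, ?_, ?_⟩
  · rw [hderiv]
    field_simp
    ring
  · -- middle inequality
    have hkey : a1 * a2 * (2 * a5 * u + u ^ 2 + a2 * a5)
        ≤ a3 / (1 + a3 ^ 2) * (a2 - a5) * u ^ 2 := by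
      refine le_trans ?_ h7b
      have : 2 * a5 * u + u ^ 2 + a2 * a5 ≤ (1 + a2) ^ 2 := by nlinarith
      nlinarith [mul_pos h1 h2]
    have hnum : a3 ^ 3 * (a2 - a5) * u ^ 2 / (1 + a3 ^ 2)
        ≤ a3 * (a2 - a5) * u ^ 2 - a1 * a2 * (2 * a5 * u + u ^ 2 + a2 * a5) := by
      rw [div_le_iff₀ ha3sq]
      rw [div_mul_eq_mul_div, div_mul_eq_mul_div, le_div_iff₀ ha3sq] at hkey
      nlinarith
    have hdb : (a2 + u) * (a5 + u) ^ 2 * (a1 * a2 + a3 * u)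
        ≤ (a2 + 1) * (a5 + 1) ^ 2 * (a3 * u * (a3 ^ 2 + 2) / (a3 ^ 2 + 1)) := by
      have hd8 : a1 * a2 + a3 * u ≤ a3 * u * (a3 ^ 2 + 2) / (a3 ^ 2 + 1) := by
        rw [le_div_iff₀ (by positivity)]
        rw [div_mul_eq_mul_div, le_div_iff₀ ha3sq] at h7a
        nlinarith
      gcongr <;> nlinarith
    have heq : a4 * a3 ^ 2 * (a2 - a5) * u / ((a2 + 1) * (a5 + 1) ^ 2 * (a3 ^ 2 + 2))
        = a4 * (a3 ^ 3 * (a2 - a5) * u ^ 2 / (1 + a3 ^ 2))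
          / ((a2 + 1) * (a5 + 1) ^ 2 * (a3 * u * (a3 ^ 2 + 2) / (a3 ^ 2 + 1))) := by
      field_simp
      ring
    rw [heq]
    have hnn : 0 ≤ a4 * (a3 * (a2 - a5) * u ^ 2 - a1 * a2 * (2 * a5 * u + u ^ 2 + a2 * a5)) :=
      mul_nonneg h4.le (le_trans (by positivity) hnum)
    exact div_le_div₀ hnn (mul_le_mul_of_nonneg_left hnum h4.le) (by positivity) hdb
  · have hmin : min 1 m ≤ 2 * u := by linarith
    calc a4 * a3 ^ 2 * (a2 - a5) * min 1 m / (2 * (a2 + 1) * (a5 + 1) ^ 2 * (a3 ^ 2 + 2))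
        ≤ a4 * a3 ^ 2 * (a2 - a5) * (2 * u) / (2 * (a2 + 1) * (a5 + 1) ^ 2 * (a3 ^ 2 + 2)) := by
          gcongr
      _ = a4 * a3 ^ 2 * (a2 - a5) * u / ((a2 + 1) * (a5 + 1) ^ 2 * (a3 ^ 2 + 2)) := by
          field_simp
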